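/- Let C be a local three-dimensional regular ring with maximal ideal m = (x,y,z), and let R = C/(x^i + y^j − z^k) with k > i ≥ 1, j ≥ 1. In the forcing algebra A = R[T_1,T_2]/(xT_1 + yT_2 − z), one has x^i ∈ (y, x^{i+1})A. -/

import Mathlib

set_option maxHeartbeats 1000000


open MvPolynomial

/-- The hypersurface ring `R = C/(x^i + y^j - z^k)`. -/
abbrev Hyp18 {S : Type*} [CommRing S] (x y z : S) (i j k : ℕ) :=
  S ⧸ Ideal.span ({x ^ i + y ^ j - z ^ k} : Set S)

/-- The forcing ideal `(x·T₁ + y·T₂ - z)` over `R = C/(x^i + y^j - z^k)`. -/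
noncomputable def forcingIdeal18 {S : Type*} [CommRing S] (x y z : S) (i j k : ℕ) :
    Ideal (MvPolynomial (Fin 2) (Hyp18 x y z i j k)) :=
  Ideal.span
    {C (Ideal.Quotient.mk _ x) * X 0 + C (Ideal.Quotient.mk _ y) * X 1 -
      C (Ideal.Quotient.mk _ z)}

/-- The forcing algebra `A = R[T₁,T₂]/(xT₁ + yT₂ - z)` over `R = C/(x^i + y^j - z^k)`. -/
abbrev ForcingAlgebra18 {S : Type*} [CommRing S] (x y z : S) (i j k : ℕ) :=
  MvPolynomial (Fin 2) (Hyp18 x y z i j k) ⧸ forcingIdeal18 x y z i j k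

/-- Let `C` be a local three-dimensional regular ring with maximal ideal `m = (x,y,z)` and
`R = C/(x^i + y^j - z^k)` with `k > i ≥ 1`, `j ≥ 1`. In the forcing algebra
`A = R[T₁,T₂]/(xT₁ + yT₂ - z)` one has `x^i ∈ (y, x^{i+1})A`. -/
theorem pow_mem_forcing_algebra {S : Type*} [CommRing S] [IsNoetherianRing S] [IsLocalRing S]
    (x y z : S) (hdim : ringKrullDim S = 3)
    (hmax : IsLocalRing.maximalIdeal S = Ideal.span {x, y, z})
    (i j k : ℕ) (hik : i < k) (hi : 1 ≤ i) (hj : 1 ≤ j) :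
    algebraMap (Hyp18 x y z i j k) (ForcingAlgebra18 x y z i j k)
        (Ideal.Quotient.mk _ x) ^ i ∈
      Ideal.span {algebraMap (Hyp18 x y z i j k) (ForcingAlgebra18 x y z i j k)
          (Ideal.Quotient.mk _ y),
        algebraMap (Hyp18 x y z i j k) (ForcingAlgebra18 x y z i j k)
          (Ideal.Quotient.mk _ x) ^ (i + 1)} := by
  set g := algebraMap (Hyp18 x y z i j k) (ForcingAlgebra18 x y z i j k) with hg
  set a := g (Ideal.Quotient.mk _ x) with ha
  set b := g (Ideal.Quotient.mk _ y) with hb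
  set c := g (Ideal.Quotient.mk _ z) with hc
  set t₁ := (Ideal.Quotient.mk (forcingIdeal18 x y z i j k)) (X 0) with ht1
  set t₂ := (Ideal.Quotient.mk (forcingIdeal18 x y z i j k)) (X 1) with ht2
  have halg : ∀ r : Hyp18 x y z i j k,
      g r = (Ideal.Quotient.mk (forcingIdeal18 x y z i j k)) (MvPolynomial.C r) :=
    fun r => rfl
  have hR : (Ideal.Quotient.mk (Ideal.span ({x ^ i + y ^ j - z ^ k} : Set S)) x) ^ i
      + (Ideal.Quotient.mk _ y) ^ j = (Ideal.Quotient.mk _ z) ^ k := by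
    have h0 : (Ideal.Quotient.mk (Ideal.span ({x ^ i + y ^ j - z ^ k} : Set S)))
        (x ^ i + y ^ j - z ^ k) = 0 :=
      Ideal.Quotient.eq_zero_iff_mem.mpr (Ideal.subset_span rfl)
    rw [map_sub, map_add, map_pow, map_pow, map_pow, sub_eq_zero] at h0
    exact h0
  have hA : a ^ i + b ^ j = c ^ k := by
    have := congrArg g hR
    simpa [map_add, map_pow] using this
  have hz : a * t₁ + b * t₂ = c := by
    have h0 : (Ideal.Quotient.mk (forcingIdeal18 x y z i j k))
        (MvPolynomial.C (Ideal.Quotient.mk _ x) * X 0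
          + MvPolynomial.C (Ideal.Quotient.mk _ y) * X 1
          - MvPolynomial.C (Ideal.Quotient.mk _ z)) = 0 := by
      refine Ideal.Quotient.eq_zero_iff_mem.mpr (Ideal.subset_span ?_)
      rfl
    rw [map_sub, map_add, map_mul, map_mul, sub_eq_zero] at h0
    rw [ha, hb, hc, halg, halg, halg]
    exact h0
  have key : a ^ i = (a * t₁ + b * t₂) ^ k - b ^ j := by
    rw [hz]; linear_combination hA
  rw [key]
  have hbI : b ∈ Ideal.span {b, a ^ (i + 1)} :=
    Ideal.subset_span (Set.mem_insert _ _)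
  have haI : a ^ (i + 1) ∈ Ideal.span {b, a ^ (i + 1)} :=
    Ideal.subset_span (Set.mem_insert_of_mem _ rfl)
  refine Ideal.sub_mem _ ?_ ?_
  · rw [show (a * t₁ + b * t₂) ^ k = _ from add_pow (R := ForcingAlgebra18 x y z i j k) _ _ _]
    refine Ideal.sum_mem _ fun m hm => ?_
    rcases eq_or_lt_of_le (Finset.mem_range_succ_iff.mp hm) with h | h
    · subst h
      have : (a * t₁) ^ m * (b * t₂) ^ (m - m) * (m.choose m : _) =
          a ^ (i + 1) * (a ^ (m - (i + 1)) * t₁ ^ m * (m.choose m : _)) := by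
        rw [Nat.sub_self, pow_zero, mul_one, ← mul_assoc, ← mul_assoc,
          ← pow_add, Nat.add_sub_cancel' hik]; ring
      rw [this]
      have := Ideal.mul_mem_left _ (a ^ (m - (i + 1)) * t₁ ^ m * (m.choose m : _)) haI
      rwa [show (a ^ (m - (i + 1)) * t₁ ^ m * (m.choose m : _)) * a ^ (i + 1) = a ^ (i + 1) * (a ^ (m - (i + 1)) * t₁ ^ m * (m.choose m : _)) by ring] at this
    · obtain ⟨n, hn⟩ : ∃ n, k - m = n + 1 := ⟨k - m - 1, by omega⟩
      have : (a * t₁) ^ m * (b * t₂) ^ (k - m) * (k.choose m : _) =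
          b * ((a * t₁) ^ m * ((b * t₂) ^ n * t₂) * (k.choose m : _)) := by
        rw [hn, pow_succ]; ring
      rw [this]
      have := Ideal.mul_mem_left _ ((a * t₁) ^ m * ((b * t₂) ^ n * t₂) * (k.choose m : _)) hbI
      rwa [show ((a * t₁) ^ m * ((b * t₂) ^ n * t₂) * (k.choose m : _)) * b = b * ((a * t₁) ^ m * ((b * t₂) ^ n * t₂) * (k.choose m : _)) by ring] at this
  · exact Ideal.pow_mem_of_mem _ hbI j hj
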